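/- Let H be an additive subgroup of F_q with |H| = n+1 containing 0, let D = H \ {0}, and let γ ∈ H. Then the number of m-tuples (x_1,...,x_m) ∈ D^m with x_1 + ... + x_m = γ equals n^m/(n+1) + ((n+1)·[γ=0] − 1)/(n+1) · (−1)^m, where [γ=0] is 1 if γ = 0 and 0 otherwise. -/

import Mathlib

open Finset

set_option maxHeartbeats 1000000 in
open scoped Classical in
private theorem aux10_rec {F : Type*} [Field F] [Fintype F] [DecidableEq F]
    (H : AddSubgroup F) (m : ℕ) (γ : F) :
    (univ.filter (fun x : Fin (m + 1) → F =>
        (∀ i, x i ∈ H ∧ x i ≠ 0) ∧ ∑ i, x i = γ)).card =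
      ∑ d ∈ (univ.filter (· ∈ H)).erase 0,
        (univ.filter (fun x : Fin m → F =>
          (∀ i, x i ∈ H ∧ x i ≠ 0) ∧ ∑ i, x i = γ - d)).card := by
  set D : Finset F := (univ.filter (· ∈ H)).erase 0 with hD
  set S := univ.filter (fun x : Fin (m + 1) → F =>
      (∀ i, x i ∈ H ∧ x i ≠ 0) ∧ ∑ i, x i = γ) with hS
  have hmemD : ∀ d : F, d ∈ D ↔ d ≠ 0 ∧ d ∈ H := by
    intro d; simp [hD]
  have h1 : S.card = ∑ d : F, (S.filter (fun x => x 0 = d)).card :=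
    Finset.card_eq_sum_card_fiberwise (f := fun x : Fin (m + 1) → F => x 0) (s := S) (t := univ)
      (fun x _ => mem_univ _)
  rw [h1, ← Finset.sum_subset (Finset.subset_univ D)]
  · apply Finset.sum_congr rfl
    intro d hd
    refine Finset.card_bij' (fun x _ => Fin.tail x) (fun y _ => Fin.cons d y) ?_ ?_ ?_ ?_
    · intro a ha
      simp only [hS, Finset.mem_filter, Finset.mem_univ, true_and] at ha ⊢
      obtain ⟨⟨h2, hsum⟩, h0⟩ := ha
      refine ⟨fun i => h2 i.succ, ?_⟩
      rw [Fin.sum_univ_succ, h0] at hsum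
      have : ∑ i : Fin m, a i.succ = γ - d := by rw [← hsum]; ring
      exact this
    · intro b hb
      simp only [hS, Finset.mem_filter, Finset.mem_univ, true_and] at hb ⊢
      obtain ⟨h2, h3⟩ := hb
      rw [hmemD] at hd
      refine ⟨⟨?_, ?_⟩, ?_⟩
      · intro i
        refine Fin.cases ?_ ?_ i
        · simpa using ⟨hd.2, hd.1⟩
        · intro j; simpa using h2 j
      · rw [Fin.sum_univ_succ]
        simp [h3]
      · simp
    · intro a ha
      have h0 : a 0 = d := (Finset.mem_filter.1 ha).2
      simp only [← h0]
      exact Fin.cons_self_tail a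
    · intro b hb
      simp
  · intro d _ hd
    rw [Finset.card_eq_zero, Finset.eq_empty_iff_forall_notMem]
    intro x hx
    simp only [hS, Finset.mem_filter, Finset.mem_univ, true_and] at hx
    obtain ⟨⟨h3, _⟩, h4⟩ := hx
    exact hd ((hmemD d).2 ⟨h4 ▸ (h3 0).2, h4 ▸ (h3 0).1⟩)

set_option maxHeartbeats 1000000 in
open scoped Classical in
private theorem aux10_formula {F : Type*} [Field F] [Fintype F] [DecidableEq F]
    (H : AddSubgroup F) (n : ℕ) (hn : Nat.card H = n + 1) :
    ∀ m : ℕ, ∀ γ ∈ H,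
      ((univ.filter (fun x : Fin m → F =>
          (∀ i, x i ∈ H ∧ x i ≠ 0) ∧ ∑ i, x i = γ)).card : ℚ) =
        (n : ℚ) ^ m / (n + 1) +
          (((n + 1) * (if γ = 0 then 1 else 0) - 1) / (n + 1)) * (-1) ^ m := by
  have hcard : ((univ : Finset F).filter (· ∈ H)).card = n + 1 := by
    rw [← hn, Nat.card_eq_fintype_card, Fintype.card_subtype]
  have h0mem : (0 : F) ∈ (univ : Finset F).filter (· ∈ H) := by simp [H.zero_mem]
  have hDcard : (((univ : Finset F).filter (· ∈ H)).erase 0).card = n := by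
    rw [Finset.card_erase_of_mem h0mem, hcard]
    omega
  have hne : ((n : ℚ) + 1) ≠ 0 := by positivity
  intro m
  induction m with
  | zero =>
    intro γ hγ
    by_cases h : γ = 0
    · subst h
      have he : (univ.filter (fun x : Fin 0 → F =>
          (∀ i, x i ∈ H ∧ x i ≠ 0) ∧ ∑ i, x i = (0 : F))) = univ := by
        ext x; simp
      rw [he]
      simp only [if_pos rfl]
      rw [show ((univ : Finset (Fin 0 → F)).card : ℚ) = 1 by simp]
      simp
      rw [eq_comm, inv_eq_one_div, ← add_div, add_comm (1 : ℚ), div_self hne]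
    · have he : (univ.filter (fun x : Fin 0 → F =>
          (∀ i, x i ∈ H ∧ x i ≠ 0) ∧ ∑ i, x i = γ)) = ∅ := by
        ext x
        simp only [Finset.mem_filter, Finset.mem_univ, true_and, Finset.notMem_empty,
          iff_false]
        rintro ⟨-, hs⟩
        exact h (by simpa using hs.symm)
      rw [he, if_neg h]
      simp only [Finset.card_empty, Nat.cast_zero]
      field_simp
      ring
  | succ m ih =>
    intro γ hγ
    rw [aux10_rec H m γ]
    push_cast
    have hmem : ∀ d ∈ ((univ : Finset F).filter (· ∈ H)).erase 0, γ - d ∈ H := by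
      intro d hd
      exact H.sub_mem hγ (Finset.mem_filter.1 (Finset.mem_erase.1 hd).2).2
    rw [Finset.sum_congr rfl (fun d hd => ih (γ - d) (hmem d hd))]
    have hterm : ∀ d : F,
        (n : ℚ) ^ m / (n + 1) +
          (((n : ℚ) + 1) * (if γ - d = 0 then 1 else 0) - 1) / (n + 1) * (-1) ^ m =
        ((n : ℚ) ^ m / (n + 1) - (-1) ^ m / (n + 1)) +
          (if γ = d then ((-1 : ℚ)) ^ m else 0) := by
      intro d
      by_cases h : γ = d
      · rw [if_pos (by rw [h, sub_self]), if_pos h]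
        field_simp
        ring
      · rw [if_neg (fun hh => h (sub_eq_zero.1 hh)), if_neg h]
        field_simp
        ring
    rw [Finset.sum_congr rfl (fun d _ => hterm d), Finset.sum_add_distrib,
      Finset.sum_const, Finset.sum_ite_eq, hDcard]
    have hγD : γ ∈ ((univ : Finset F).filter (· ∈ H)).erase 0 ↔ γ ≠ 0 := by
      simp [hγ]
    by_cases h : γ = 0
    · rw [if_neg (by rw [hγD]; exact fun hh => hh h), if_pos h]
      push_cast
      rw [nsmul_eq_mul]
      field_simp
      ring
    · rw [if_pos (hγD.2 h), if_neg h]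
      push_cast
      rw [nsmul_eq_mul]
      field_simp
      ring

open scoped Classical in
theorem stmt10 {F : Type*} [Field F] [Fintype F] [DecidableEq F] (H : AddSubgroup F) (n m : ℕ)
    (hn : Nat.card H = n + 1) (hm : 1 ≤ m) (γ : F) (hγ : γ ∈ H) :
    (Nat.card {x : Fin m → F //
        (∀ i, x i ∈ H ∧ x i ≠ 0) ∧ ∑ i, x i = γ} : ℚ) =
      (n : ℚ) ^ m / (n + 1) +
        (((n + 1) * (if γ = 0 then 1 else 0) - 1) / (n + 1)) * (-1) ^ m := by
  have h1 : Nat.card {x : Fin m → F //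
      (∀ i, x i ∈ H ∧ x i ≠ 0) ∧ ∑ i, x i = γ} =
      (univ.filter (fun x : Fin m → F =>
        (∀ i, x i ∈ H ∧ x i ≠ 0) ∧ ∑ i, x i = γ)).card := by
    rw [Nat.card_eq_fintype_card, Fintype.card_subtype]
  rw [h1]
  exact aux10_formula H n hn m γ hγ
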